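/- Let Z be a real random variable. If there exists an irrational u ∈ ℝ such that {Z} and {Z + u} have the same law, then the law of {Z} is the uniform distribution on [0,1). -/

import Mathlib

open MeasureTheory Set

namespace FractUniformAux

noncomputable section

local notation "𝕋" => AddCircle (1 : ℝ)

instance : Fact ((0:ℝ) < 1) := ⟨one_pos⟩

lemma fourier_add_eq (n : ℤ) (x y : 𝕋) :
    fourier n (x + y) = fourier n x * fourier n y := by
  simp only [fourier_apply, smul_add, AddCircle.toCircle_add, Circle.coe_mul]

lemma integrable_CM (m : Measure 𝕋) [IsFiniteMeasure m] (f : C(𝕋, ℂ)) :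
    Integrable f m := by
  have := (BoundedContinuousFunction.mkOfCompact f).integrable m
  exact this

lemma continuous_integral_CM (m : Measure 𝕋) [IsFiniteMeasure m] :
    Continuous fun f : C(𝕋, ℂ) => ∫ x, f x ∂m := by
  refine (LipschitzWith.of_dist_le_mul (K := (m univ).toReal.toNNReal)
    (fun f g => ?_)).continuous
  rw [dist_eq_norm, ← integral_sub (integrable_CM m f) (integrable_CM m g)]
  have hb : ∀ x, ‖f x - g x‖ ≤ dist f g := by
    intro x
    rw [← dist_eq_norm]
    exact ContinuousMap.dist_apply_le_dist x
  calc ‖∫ x, (f x - g x) ∂m‖ ≤ dist f g * (m univ).toReal :=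
        norm_integral_le_of_norm_le_const (Filter.Eventually.of_forall hb)
    _ = ((m univ).toReal.toNNReal : ℝ) * dist f g := by
        rw [Real.coe_toNNReal _ ENNReal.toReal_nonneg]; ring

lemma fourier_coe_irrational_ne_one {u : ℝ} (hu : Irrational u) {n : ℤ} (hn : n ≠ 0) :
    fourier n ((u : ℝ) : 𝕋) ≠ 1 := by
  rw [fourier_coe_apply]
  intro hc1
  rcases Complex.exp_eq_one_iff.1 hc1 with ⟨k, hk⟩
  have h2 : (2 * (Real.pi:ℂ) * Complex.I) ≠ 0 := by
    simp [Real.pi_ne_zero, Complex.I_ne_zero, Complex.ofReal_ne_zero]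
  rw [Complex.ofReal_one, div_one] at hk
  have h3 : ((n * u : ℝ) : ℂ) = ((k : ℤ) : ℂ) := by
    push_cast
    have h5 : (2 * (Real.pi:ℂ) * Complex.I) * ((n : ℂ) * (u : ℂ)) =
        (2 * (Real.pi:ℂ) * Complex.I) * (k : ℂ) := by
      linear_combination hk
    exact mul_left_cancel₀ h2 h5
  have h4 : (n : ℝ) * u = (k : ℝ) := by exact_mod_cast h3
  exact (hu.intCast_mul hn).ne_int k h4

lemma integral_fourier_eq_zero {ν : Measure 𝕋} [IsProbabilityMeasure ν] {u : ℝ}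
    (hu : Irrational u) (hinv : ν.map (· + ((u : ℝ) : 𝕋)) = ν) {n : ℤ} (hn : n ≠ 0) :
    ∫ x, fourier n x ∂ν = 0 := by
  have hc := fourier_coe_irrational_ne_one hu hn
  have key : ∫ x, fourier n x ∂ν = (∫ x, fourier n x ∂ν) * fourier n ((u:ℝ) : 𝕋) := by
    conv_lhs => rw [← hinv]
    rw [integral_map (measurable_add_const _).aemeasurable
      (map_continuous (fourier n)).aestronglyMeasurable]
    simp_rw [fourier_add_eq]
    rw [integral_mul_const]
  have h0 : (∫ x, fourier n x ∂ν) * (fourier n ((u:ℝ) : 𝕋) - 1) = 0 := by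
    rw [mul_sub, mul_one, ← key, sub_self]
  rcases mul_eq_zero.1 h0 with h | h
  · exact h
  · exact absurd h (sub_ne_zero.2 hc)

lemma eq_haar {ν : Measure 𝕋} [IsProbabilityMeasure ν] {u : ℝ} (hu : Irrational u)
    (hinv : ν.map (· + ((u : ℝ) : 𝕋)) = ν) :
    ν = AddCircle.haarAddCircle := by
  have hinvh : (AddCircle.haarAddCircle (T := 1)).map (· + ((u:ℝ) : 𝕋)) =
      AddCircle.haarAddCircle := map_add_right_eq_self _ _
  have key : ∀ f : C(𝕋, ℂ), ∫ x, f x ∂ν = ∫ x, f x ∂(AddCircle.haarAddCircle) := by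
    have hdense : Dense ((Submodule.span ℂ (Set.range (fourier (T := 1)))) : Set C(𝕋, ℂ)) := by
      rw [dense_iff_closure_eq, ← Submodule.topologicalClosure_coe,
        span_fourier_closure_eq_top]
      rfl
    have heq : Set.EqOn (fun f : C(𝕋, ℂ) => ∫ x, f x ∂ν)
        (fun f : C(𝕋, ℂ) => ∫ x, f x ∂(AddCircle.haarAddCircle))
        ((Submodule.span ℂ (Set.range (fourier (T := 1)))) : Set C(𝕋, ℂ)) := by
      intro f hf
      simp only
      induction hf using Submodule.span_induction with
      | mem f hf =>
        obtain ⟨n, rfl⟩ := hf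
        rcases eq_or_ne n 0 with rfl | hn
        · have h1 : ⇑(fourier (T := 1) 0) = fun _ : 𝕋 => (1 : ℂ) := by
            ext x; exact fourier_zero
          rw [h1]
          simp
        · rw [integral_fourier_eq_zero hu hinv hn, integral_fourier_eq_zero hu hinvh hn]
      | zero => simp
      | add f g _ _ hf hg =>
        simp only [ContinuousMap.coe_add, Pi.add_apply]
        rw [integral_add (integrable_CM _ f) (integrable_CM _ g),
          integral_add (integrable_CM _ f) (integrable_CM _ g), hf, hg]
      | smul c f _ hf =>
        simp only [ContinuousMap.coe_smul, Pi.smul_apply, smul_eq_mul]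
        rw [integral_const_mul, integral_const_mul, hf]
    have := Continuous.ext_on hdense (continuous_integral_CM ν)
      (continuous_integral_CM AddCircle.haarAddCircle) heq
    exact fun f => congrFun this f
  refine ext_of_forall_lintegral_eq_of_IsFiniteMeasure fun f => ?_
  have hcont : Continuous fun x : 𝕋 => ((f x : ℝ) : ℂ) :=
    Complex.continuous_ofReal.comp (NNReal.continuous_coe.comp f.continuous)
  have h1 := key ⟨fun x => ((f x : ℝ) : ℂ), hcont⟩
  simp only [ContinuousMap.coe_mk] at h1
  have i1 : ∫ x, ((f x : ℝ) : ℂ) ∂ν = ((∫ x, (f x : ℝ) ∂ν : ℝ) : ℂ) := integral_ofReal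
  have i2 : ∫ x, ((f x : ℝ) : ℂ) ∂(AddCircle.haarAddCircle)
      = ((∫ x, (f x : ℝ) ∂(AddCircle.haarAddCircle) : ℝ) : ℂ) := integral_ofReal
  rw [i1, i2] at h1
  have hre : ∫ x, (f x : ℝ) ∂ν = ∫ x, (f x : ℝ) ∂(AddCircle.haarAddCircle) :=
    Complex.ofReal_inj.1 h1
  have e1 := f.toReal_lintegral_coe_eq_integral ν
  have e2 := f.toReal_lintegral_coe_eq_integral (AddCircle.haarAddCircle (T := 1))
  exact (ENNReal.toReal_eq_toReal_iff' (f.lintegral_lt_top_of_nnreal ν).ne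
    (f.lintegral_lt_top_of_nnreal _).ne).1 (by rw [e1, e2, hre])

lemma eq_volume {ν : Measure 𝕋} [IsProbabilityMeasure ν] {u : ℝ} (hu : Irrational u)
    (hinv : ν.map (· + ((u : ℝ) : 𝕋)) = ν) :
    ν = (volume : Measure 𝕋) := by
  rw [eq_haar hu hinv, AddCircle.volume_eq_smul_haarAddCircle]
  simp

lemma coe_fract (x : ℝ) : ((Int.fract x : ℝ) : 𝕋) = (x : 𝕋) := by
  have hz : (((⌊x⌋ : ℤ) : ℝ) : 𝕋) = 0 := by
    rw [AddCircle.coe_eq_zero_iff]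
    exact ⟨⌊x⌋, by simp⟩
  rw [Int.fract, AddCircle.coe_sub, hz, sub_zero]

/-- The projection map from the circle back to `[0,1) ⊆ ℝ`. -/
def gIco : 𝕋 → ℝ := fun x => ((AddCircle.equivIco 1 0 x : ℝ))

lemma measurable_gIco : Measurable gIco :=
  measurable_subtype_coe.comp (AddCircle.measurableEquivIco (T := 1) 0).measurable

lemma gIco_coe (x : ℝ) : gIco ((x : ℝ) : 𝕋) = Int.fract x := by
  simp [gIco, AddCircle.coe_equivIco_mk_apply]

lemma volume_map_gIco :
    (volume : Measure 𝕋).map gIco = volume.restrict (Ico (0:ℝ) 1) := by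
  have h1 : (volume : Measure 𝕋) = (volume.restrict (Ioc (0:ℝ) (0+1))).map ((↑) : ℝ → 𝕋) :=
    (AddCircle.measurePreserving_mk 1 0).map_eq.symm
  rw [h1, Measure.map_map measurable_gIco AddCircle.measurable_mk']
  have hIoc : volume.restrict (Ioc (0:ℝ) (0+1)) = volume.restrict (Ico (0:ℝ) 1) := by
    rw [zero_add]
    exact Measure.restrict_congr_set (Ioc_ae_eq_Icc.trans Ico_ae_eq_Icc.symm)
  rw [hIoc]
  have hae : (gIco ∘ (QuotientAddGroup.mk : ℝ → 𝕋)) =ᵐ[volume.restrict (Ico (0:ℝ) 1)] id := by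
    filter_upwards [ae_restrict_mem measurableSet_Ico] with x hx
    show gIco ((x : ℝ) : 𝕋) = x
    rw [gIco_coe, Int.fract_eq_self.2 ⟨hx.1, hx.2⟩]
  rw [Measure.map_congr hae, Measure.map_id]

end

end FractUniformAux

/-- If there exists an irrational `u` such that `{Z}` and `{Z + u}`
have the same law, then the law of `{Z}` is the uniform distribution on `[0,1)`. -/
theorem fract_law_uniform_of_irrational_shift
    {Ω : Type*} [MeasurableSpace Ω] (P : Measure Ω) [IsProbabilityMeasure P]
    (Z : Ω → ℝ) (hZ : Measurable Z)
    (h : ∃ u : ℝ, Irrational u ∧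
        P.map (fun ω => Int.fract (Z ω)) = P.map (fun ω => Int.fract (Z ω + u))) :
    P.map (fun ω => Int.fract (Z ω)) = volume.restrict (Set.Ico (0 : ℝ) 1) := by
  classical
  obtain ⟨u, hu, hlaw⟩ := h
  have hcm : Measurable ((↑) : ℝ → AddCircle (1:ℝ)) := AddCircle.measurable_mk'
  have hZc : Measurable fun ω => ((Z ω : ℝ) : AddCircle (1:ℝ)) := hcm.comp hZ
  set ν : Measure (AddCircle (1:ℝ)) := P.map (fun ω => ((Z ω : ℝ) : AddCircle (1:ℝ))) with hν
  haveI : IsProbabilityMeasure ν := Measure.isProbabilityMeasure_map hZc.aemeasurable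
  -- invariance of ν under rotation by u
  have hmap1 : (P.map (fun ω => Int.fract (Z ω))).map ((↑) : ℝ → AddCircle (1:ℝ)) = ν := by
    rw [Measure.map_map (f := fun ω => Int.fract (Z ω)) hcm (measurable_fract.comp hZ)]
    congr 1
    funext ω
    exact FractUniformAux.coe_fract (Z ω)
  have hmap2 : (P.map (fun ω => Int.fract (Z ω + u))).map ((↑) : ℝ → AddCircle (1:ℝ))
      = ν.map (· + ((u : ℝ) : AddCircle (1:ℝ))) := by
    rw [Measure.map_map (f := fun ω => Int.fract (Z ω + u)) hcm
        (measurable_fract.comp (hZ.add_const u)),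
      hν, Measure.map_map (measurable_add_const _) hZc]
    congr 1
    funext ω
    show ((Int.fract (Z ω + u) : ℝ) : AddCircle (1:ℝ))
        = ((Z ω : ℝ) : AddCircle (1:ℝ)) + ((u : ℝ) : AddCircle (1:ℝ))
    rw [FractUniformAux.coe_fract (Z ω + u), AddCircle.coe_add]
  have hinv : ν.map (· + ((u : ℝ) : AddCircle (1:ℝ))) = ν := by
    rw [← hmap2, ← hlaw, hmap1]
  -- ν is the uniform measure on the circle
  have hνvol : ν = (volume : Measure (AddCircle (1:ℝ))) :=
    FractUniformAux.eq_volume hu hinv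
  -- pull back to [0,1)
  have hpull : P.map (fun ω => Int.fract (Z ω)) = ν.map FractUniformAux.gIco := by
    rw [hν, Measure.map_map FractUniformAux.measurable_gIco hZc]
    congr 1
    funext ω
    exact (FractUniformAux.gIco_coe (Z ω)).symm
  rw [hpull, hνvol, FractUniformAux.volume_map_gIco]
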